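/- Let d, k be positive natural numbers, σ > 0, ε : ℝ, u, v ∈ EuclideanSpace ℝ (Fin d), and π : Fin k → Equiv.Perm (Fin d) a family of coordinate permutations. For m ∈ EuclideanSpace ℝ (Fin d), let q_m(y) = (2πσ²)^(−d/2) · Real.exp (−‖y − m‖² / (2σ²)) denote the Gaussian density with mean m and covariance σ²I. Define the shuffled mixture densities p(y) = (1/k) · ∑ i, q_{u∘π i}(y) and p'(y) = (1/k) · ∑ i, q_{v∘π i}(y), where (w∘π i) j = w (π i j). Then for every measurable set O ⊆ EuclideanSpace ℝ (Fin d), ∫_O (p(y) − Real.exp ε · p'(y)) dy ≤ ∫ max (q_u(y) − Real.exp ε · q_v(y)) 0 dy, both integrals being with respect to Lebesgue measure on EuclideanSpace ℝ (Fin d). Hence if the unshuffled Gaussian mechanism satisfies (ε,δ)-DP on the pair (u, v), so does the shuffled Gaussian mechanism. -/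

import Mathlib

open MeasureTheory

/-- Density of the Gaussian distribution on `EuclideanSpace ℝ (Fin d)` with mean `m` and
covariance `σ²I`. -/
noncomputable def gaussDensity {d : ℕ} (σ : ℝ) (m y : EuclideanSpace ℝ (Fin d)) : ℝ :=
  (2 * Real.pi * σ ^ 2) ^ (-(d : ℝ) / 2) * Real.exp (-‖y - m‖ ^ 2 / (2 * σ ^ 2))

lemma gaussDensity_nonneg {d : ℕ} {σ : ℝ} (hσ : 0 < σ) (m y : EuclideanSpace ℝ (Fin d)) :
    0 ≤ gaussDensity σ m y := by
  unfold gaussDensity; positivity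

lemma gaussDensity_continuous {d : ℕ} (σ : ℝ) (m : EuclideanSpace ℝ (Fin d)) :
    Continuous (gaussDensity σ m) := by
  unfold gaussDensity
  fun_prop

lemma integrable_rexp_neg_mul_sq_norm {d : ℕ} {b : ℝ} (hb : 0 < b) :
    Integrable (fun v : EuclideanSpace ℝ (Fin d) => Real.exp (-b * ‖v‖ ^ 2)) := by
  have h := (GaussianFourier.integrable_cexp_neg_mul_sq_norm_add (V := EuclideanSpace ℝ (Fin d))
    (show 0 < (b : ℂ).re from hb) 0 0).norm
  convert h using 2 with v
  simp [Complex.norm_exp]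
  left; norm_cast

lemma gaussDensity_integrable {d : ℕ} {σ : ℝ} (hσ : 0 < σ) (m : EuclideanSpace ℝ (Fin d)) :
    Integrable (gaussDensity σ m) := by
  have hb : 0 < 1 / (2 * σ ^ 2) := by positivity
  have h := ((integrable_rexp_neg_mul_sq_norm (d := d) hb).comp_sub_right m).const_mul
    ((2 * Real.pi * σ ^ 2) ^ (-(d : ℝ) / 2))
  convert h using 2 with y
  unfold gaussDensity
  congr 1
  rw [neg_div, neg_mul, div_eq_mul_inv, mul_comm, one_div]

noncomputable def permIso {d : ℕ} (e : Equiv.Perm (Fin d)) :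
    EuclideanSpace ℝ (Fin d) ≃ₗᵢ[ℝ] EuclideanSpace ℝ (Fin d) :=
  LinearIsometryEquiv.piLpCongrLeft 2 ℝ ℝ e

lemma gauss_perm {d : ℕ} (σ : ℝ) (e : Equiv.Perm (Fin d)) (w y : EuclideanSpace ℝ (Fin d)) :
    gaussDensity σ (WithLp.toLp 2 (fun j => w (e j))) y = gaussDensity σ w (permIso e y) := by
  have key : permIso e y - w
      = permIso e (y - (show EuclideanSpace ℝ (Fin d) from WithLp.toLp 2 (fun j => w (e j)))) := by
    ext j
    simp [permIso, LinearIsometryEquiv.piLpCongrLeft_apply, Equiv.piCongrLeft'_apply,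
      PiLp.sub_apply]
  unfold gaussDensity
  rw [show ‖y - (show EuclideanSpace ℝ (Fin d) from WithLp.toLp 2 (fun j => w (e j)))‖ = ‖permIso e y - w‖ by
    rw [key, LinearIsometryEquiv.norm_map]]

lemma integral_comp_permIso {d : ℕ} (e : Equiv.Perm (Fin d))
    (f : EuclideanSpace ℝ (Fin d) → ℝ) :
    ∫ y, f (permIso e y) = ∫ y, f y :=
  (permIso e).measurePreserving.integral_comp
    (permIso e).toHomeomorph.measurableEmbedding f

lemma integrable_comp_permIso {d : ℕ} (e : Equiv.Perm (Fin d))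
    {f : EuclideanSpace ℝ (Fin d) → ℝ} (hf : Integrable f) :
    Integrable (fun y => f (permIso e y)) :=
  ((permIso e).measurePreserving.integrable_comp_emb
    (permIso e).toHomeomorph.measurableEmbedding).mpr hf

/-- **Shuffling improves the privacy of the Gaussian mechanism.** The hockey-stick quantity of
the shuffled Gaussian-mixture pair is bounded by that of the unshuffled Gaussian pair; hence if
the unshuffled Gaussian mechanism satisfies `(ε,δ)`-DP on the pair `(u, v)`, so does the
shuffled Gaussian mechanism. -/
theorem shuffled_gaussian_improves_privacy {d k : ℕ} (hd : 0 < d) (hk : 0 < k)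
    {σ : ℝ} (hσ : 0 < σ) (ε : ℝ) (u v : EuclideanSpace ℝ (Fin d))
    (π : Fin k → Equiv.Perm (Fin d)) :
    (∀ O : Set (EuclideanSpace ℝ (Fin d)), MeasurableSet O →
      ∫ y in O,
          ((1 / (k : ℝ)) * ∑ i, gaussDensity σ (WithLp.toLp 2 (fun j => u (π i j))) y
            - Real.exp ε * ((1 / (k : ℝ)) * ∑ i, gaussDensity σ (WithLp.toLp 2 (fun j => v (π i j))) y))
        ≤ ∫ y, max (gaussDensity σ u y - Real.exp ε * gaussDensity σ v y) 0) ∧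
    (∀ δ : ℝ, (∫ y, max (gaussDensity σ u y - Real.exp ε * gaussDensity σ v y) 0) ≤ δ →
      ∀ O : Set (EuclideanSpace ℝ (Fin d)), MeasurableSet O →
        ∫ y in O,
            ((1 / (k : ℝ)) * ∑ i, gaussDensity σ (WithLp.toLp 2 (fun j => u (π i j))) y
              - Real.exp ε * ((1 / (k : ℝ)) * ∑ i, gaussDensity σ (WithLp.toLp 2 (fun j => v (π i j))) y))
          ≤ δ) := by
  classical
  set c := Real.exp ε with hc
  have hc0 : 0 ≤ c := (Real.exp_pos ε).le
  set F : EuclideanSpace ℝ (Fin d) → ℝ :=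
    fun y => max (gaussDensity σ u y - c * gaussDensity σ v y) 0 with hFdef
  have hFnonneg : ∀ y, 0 ≤ F y := fun y => le_max_right _ _
  have hFcont : Continuous F :=
    ((gaussDensity_continuous σ u).sub (continuous_const.mul (gaussDensity_continuous σ v))).max
      continuous_const
  have hFint : Integrable F := by
    refine (gaussDensity_integrable hσ u).mono' hFcont.aestronglyMeasurable ?_
    filter_upwards with y
    rw [Real.norm_eq_abs, abs_of_nonneg (hFnonneg y)]
    refine max_le ?_ (gaussDensity_nonneg hσ u y)
    have := mul_nonneg hc0 (gaussDensity_nonneg hσ v y)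
    linarith
  -- the i-th term of the shuffled hockey-stick
  have hFi_eq : ∀ i : Fin k,
      (fun y => max (gaussDensity σ (WithLp.toLp 2 (fun j => u (π i j))) y
        - c * gaussDensity σ (WithLp.toLp 2 (fun j => v (π i j))) y) 0)
      = fun y => F (permIso (π i) y) := by
    intro i
    funext y
    rw [hFdef]
    simp only [gauss_perm σ (π i)]
  have hFi_int : ∀ i : Fin k,
      Integrable (fun y => max (gaussDensity σ (WithLp.toLp 2 (fun j => u (π i j))) y
        - c * gaussDensity σ (WithLp.toLp 2 (fun j => v (π i j))) y) 0) := by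
    intro i
    rw [hFi_eq i]
    exact integrable_comp_permIso (π i) hFint
  have hFi_integral : ∀ i : Fin k,
      (∫ y, max (gaussDensity σ (WithLp.toLp 2 (fun j => u (π i j))) y
        - c * gaussDensity σ (WithLp.toLp 2 (fun j => v (π i j))) y) 0) = ∫ y, F y := by
    intro i
    rw [hFi_eq i]
    exact integral_comp_permIso (π i) F
  -- the dominating function G
  set G : EuclideanSpace ℝ (Fin d) → ℝ :=
    fun y => (1 / (k : ℝ)) * ∑ i, max (gaussDensity σ (WithLp.toLp 2 (fun j => u (π i j))) y
      - c * gaussDensity σ (WithLp.toLp 2 (fun j => v (π i j))) y) 0 with hGdef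
  have hGint : Integrable G :=
    (integrable_finset_sum Finset.univ fun i _ => hFi_int i).const_mul _
  have hGnonneg : ∀ y, 0 ≤ G y := by
    intro y
    refine mul_nonneg (by positivity) (Finset.sum_nonneg fun i _ => le_max_right _ _)
  have hGintegral : (∫ y, G y) = ∫ y, F y := by
    rw [hGdef]
    rw [MeasureTheory.integral_const_mul]
    rw [integral_finset_sum Finset.univ fun i _ => hFi_int i]
    have : ∀ i ∈ Finset.univ, (∫ y, max (gaussDensity σ (WithLp.toLp 2 (fun j => u (π i j))) y
        - c * gaussDensity σ (WithLp.toLp 2 (fun j => v (π i j))) y) 0) = ∫ y, F y :=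
      fun i _ => hFi_integral i
    rw [Finset.sum_congr rfl this, Finset.sum_const, Finset.card_univ, Fintype.card_fin,
      nsmul_eq_mul]
    field_simp
  -- the LHS integrand
  set h : EuclideanSpace ℝ (Fin d) → ℝ :=
    fun y => (1 / (k : ℝ)) * ∑ i, gaussDensity σ (WithLp.toLp 2 (fun j => u (π i j))) y
      - c * ((1 / (k : ℝ)) * ∑ i, gaussDensity σ (WithLp.toLp 2 (fun j => v (π i j))) y) with hhdef
  have hhint : Integrable h := by
    refine Integrable.sub ?_ (Integrable.const_mul ?_ c) <;>
      exact (integrable_finset_sum Finset.univ fun i _ =>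
        gaussDensity_integrable hσ _).const_mul _
  have h_le_G : ∀ y, h y ≤ G y := by
    intro y
    rw [hhdef, hGdef]
    simp only
    rw [mul_left_comm, ← mul_sub, Finset.mul_sum, ← Finset.sum_sub_distrib]
    refine mul_le_mul_of_nonneg_left ?_ (by positivity)
    exact Finset.sum_le_sum fun i _ => le_max_left _ _
  have main : ∀ O : Set (EuclideanSpace ℝ (Fin d)), MeasurableSet O →
      (∫ y in O, h y) ≤ ∫ y, F y := by
    intro O hO
    calc (∫ y in O, h y) ≤ ∫ y in O, G y :=
          setIntegral_mono_on hhint.integrableOn hGint.integrableOn hO fun y _ => h_le_G y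
      _ ≤ ∫ y, G y := setIntegral_le_integral hGint
          (Filter.Eventually.of_forall hGnonneg)
      _ = ∫ y, F y := hGintegral
  exact ⟨main, fun δ hδ O hO => le_trans (main O hO) hδ⟩
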